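/- Let α ≥ 1, n ≥ 2, and let x₁,…,xₙ be pairwise distinct points in [0,π] with d_min = min_{i≠j} |x_i − x_j|. Then the smallest eigenvalue λ_min of the matrix (G_α(x_i,x_j))_{1≤i,j≤n} satisfies d_min/(2π) ≤ λ_min ≤ 2·d_min/π. In particular this matrix is positive definite. -/

import Mathlib

open Real

/-- The kernel `G_α(x,x') = α − |x − x'|/π`. -/
noncomputable def kernelG (α x x' : ℝ) : ℝ := α - |x - x'| / π

open Finset Matrix

noncomputable def Pfun (n : ℕ) (p : ℕ → ℝ) (k : ℕ) : ℝ :=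
  if k = 0 then 0 else if k ≤ n then p (k-1) else π

noncomputable def chi (k i : ℕ) : ℝ := if k ≤ i then 1 else 0

lemma ident (n : ℕ) (p : ℕ → ℝ)
    (hmono : ∀ a b, a ≤ b → b < n → p a ≤ p b)
    (i j : ℕ) (hi : i < n) (hj : j < n) (hij : i ≤ j) :
    π - |p i - p j| = ∑ k ∈ range (n+1),
      (Pfun n p (k+1) - Pfun n p k) * (chi k i * chi k j + (1 - chi k i) * (1 - chi k j)) := by
  have habs : |p i - p j| = p j - p i := by
    rw [abs_sub_comm]
    exact abs_of_nonneg (sub_nonneg.2 (hmono i j hij hj))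
  have hterm : ∀ k ∈ range (n+1),
      (Pfun n p (k+1) - Pfun n p k) * (chi k i * chi k j + (1 - chi k i) * (1 - chi k j))
      = (Pfun n p (k+1) - Pfun n p k) -
        (if k ∈ Ico (i+1) (j+1) then (Pfun n p (k+1) - Pfun n p k) else 0) := by
    intro k _
    unfold chi
    simp only [Finset.mem_Ico]
    by_cases h1 : k ≤ i <;> by_cases h2 : k ≤ j <;> split_ifs <;> first | (exfalso; omega) | ring
  rw [Finset.sum_congr rfl hterm, Finset.sum_sub_distrib, Finset.sum_range_sub (Pfun n p)]
  have hsub : Ico (i+1) (j+1) ⊆ range (n+1) := by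
    intro k hk; rw [Finset.mem_Ico] at hk; rw [Finset.mem_range]; omega
  rw [Finset.sum_ite_mem, Finset.inter_eq_right.2 hsub,
    Finset.sum_Ico_eq_sub _ (by omega : i + 1 ≤ j + 1),
    Finset.sum_range_sub (Pfun n p), Finset.sum_range_sub (Pfun n p)]
  have h1 : Pfun n p (n+1) = π := by unfold Pfun; simp
  have h0 : Pfun n p 0 = 0 := by unfold Pfun; simp
  have h2 : Pfun n p (j+1) = p j := by
    unfold Pfun; rw [if_neg (by omega), if_pos (by omega)]; simp
  have h3 : Pfun n p (i+1) = p i := by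
    unfold Pfun; rw [if_neg (by omega), if_pos (by omega)]; simp
  rw [h1, h0, h2, h3, habs]; ring

lemma swap_sum (n : ℕ) (p w : ℕ → ℝ)
    (hmono : ∀ a b, a ≤ b → b < n → p a ≤ p b) :
    ∑ i ∈ range n, ∑ j ∈ range n, w i * w j * (π - |p i - p j|)
    = ∑ k ∈ range (n+1), (Pfun n p (k+1) - Pfun n p k) *
        ((∑ i ∈ range n, chi k i * w i)^2 + (∑ i ∈ range n, (1 - chi k i) * w i)^2) := by
  have identall : ∀ i j, i < n → j < n → π - |p i - p j| = ∑ k ∈ range (n+1),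
      (Pfun n p (k+1) - Pfun n p k) * (chi k i * chi k j + (1 - chi k i) * (1 - chi k j)) := by
    intro i j hi hj
    rcases le_total i j with h | h
    · exact ident n p hmono i j hi hj h
    · rw [abs_sub_comm, ident n p hmono j i hj hi h]
      exact Finset.sum_congr rfl (fun k _ => by ring)
  calc ∑ i ∈ range n, ∑ j ∈ range n, w i * w j * (π - |p i - p j|)
      = ∑ i ∈ range n, ∑ j ∈ range n, ∑ k ∈ range (n+1),
          (Pfun n p (k+1) - Pfun n p k) *
          ((chi k i * w i) * (chi k j * w j) + ((1 - chi k i) * w i) * ((1 - chi k j) * w j)) := by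
        refine Finset.sum_congr rfl (fun i hi => Finset.sum_congr rfl (fun j hj => ?_))
        rw [identall i j (mem_range.1 hi) (mem_range.1 hj), Finset.mul_sum]
        exact Finset.sum_congr rfl (fun k _ => by ring)
    _ = ∑ k ∈ range (n+1), ∑ i ∈ range n, ∑ j ∈ range n,
          (Pfun n p (k+1) - Pfun n p k) *
          ((chi k i * w i) * (chi k j * w j) + ((1 - chi k i) * w i) * ((1 - chi k j) * w j)) := by
        rw [show (∑ i ∈ range n, ∑ j ∈ range n, ∑ k ∈ range (n+1),
          (Pfun n p (k+1) - Pfun n p k) *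
          ((chi k i * w i) * (chi k j * w j) + ((1 - chi k i) * w i) * ((1 - chi k j) * w j)))
          = ∑ i ∈ range n, ∑ k ∈ range (n+1), ∑ j ∈ range n,
          (Pfun n p (k+1) - Pfun n p k) *
          ((chi k i * w i) * (chi k j * w j) + ((1 - chi k i) * w i) * ((1 - chi k j) * w j))
          from Finset.sum_congr rfl (fun i _ => Finset.sum_comm)]
        exact Finset.sum_comm
    _ = ∑ k ∈ range (n+1), (Pfun n p (k+1) - Pfun n p k) *
          ((∑ i ∈ range n, chi k i * w i)^2 + (∑ i ∈ range n, (1 - chi k i) * w i)^2) := by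
        refine Finset.sum_congr rfl (fun k _ => ?_)
        rw [sq, sq, Finset.sum_mul_sum, Finset.sum_mul_sum, ← Finset.sum_add_distrib,
          Finset.mul_sum]
        refine Finset.sum_congr rfl (fun i _ => ?_)
        rw [← Finset.sum_add_distrib, Finset.mul_sum]

noncomputable def Ts (n : ℕ) (w : ℕ → ℝ) (k : ℕ) : ℝ := ∑ i ∈ range n, chi k i * w i
noncomputable def Ss (n : ℕ) (w : ℕ → ℝ) (k : ℕ) : ℝ := ∑ i ∈ range n, (1 - chi k i) * w i

lemma key (n : ℕ) (hn : 2 ≤ n) (p w : ℕ → ℝ) (d : ℝ) (hd : 0 ≤ d)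
    (hp0 : 0 ≤ p 0) (hpn : p (n-1) ≤ π)
    (hgap : ∀ k, k + 1 < n → p k + d ≤ p (k+1)) :
    d / 2 * ∑ i ∈ range n, (w i)^2
      ≤ ∑ i ∈ range n, ∑ j ∈ range n, w i * w j * (π - |p i - p j|) := by
  have hstep : ∀ k, k + 1 < n → p k ≤ p (k+1) := fun k hk => by linarith [hgap k hk]
  have hmono : ∀ a b, a ≤ b → b < n → p a ≤ p b := by
    intro a b hab
    induction b, hab using Nat.le_induction with
    | base => intro _; exact le_refl _
    | succ b hab ih => intro hb; exact le_trans (ih (by omega)) (hstep b (by omega))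
  rw [swap_sum n p w hmono]
  show d / 2 * ∑ i ∈ range n, (w i)^2
      ≤ ∑ k ∈ range (n+1), (Pfun n p (k+1) - Pfun n p k) * (Ts n w k ^ 2 + Ss n w k ^ 2)
  set s := ∑ i ∈ range n, w i with hs
  have hTS : ∀ m, Ss n w m + Ts n w m = s := by
    intro m; rw [Ss, Ts, ← Finset.sum_add_distrib]
    exact Finset.sum_congr rfl (fun i _ => by ring)
  have hSstep : ∀ m, m < n → Ss n w (m+1) = Ss n w m + w m := by
    intro m hm
    have h : ∀ i ∈ range n, (1 - chi (m+1) i) * w i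
        = (1 - chi m i) * w i + (if i = m then w i else 0) := by
      intro i _; unfold chi; split_ifs <;> first | (exfalso; omega) | ring
    rw [Ss, Finset.sum_congr rfl h, Finset.sum_add_distrib,
      Finset.sum_ite_eq' (range n) m w, if_pos (Finset.mem_range.2 hm)]
    rfl
  have hTstep : ∀ m, m < n → Ts n w m = Ts n w (m+1) + w m := by
    intro m hm
    have h : ∀ i ∈ range n, chi m i * w i
        = chi (m+1) i * w i + (if i = m then w i else 0) := by
      intro i _; unfold chi; split_ifs <;> first | (exfalso; omega) | ring
    rw [Ts, Finset.sum_congr rfl h, Finset.sum_add_distrib,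
      Finset.sum_ite_eq' (range n) m w, if_pos (Finset.mem_range.2 hm)]
    rfl
  have hS0 : Ss n w 0 = 0 :=
    Finset.sum_eq_zero (fun i _ => by unfold chi; rw [if_pos (Nat.zero_le _)]; ring)
  have hTn : Ts n w n = 0 :=
    Finset.sum_eq_zero (fun i hi => by
      unfold chi; rw [if_neg (by simpa using Finset.mem_range.1 hi)]; ring)
  have e0 : Ts n w 0 ^ 2 + Ss n w 0 ^ 2 = s ^ 2 := by
    have hT0 : Ts n w 0 = s := by have := hTS 0; rw [hS0] at this; linarith
    rw [hT0, hS0]; ring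
  have en : Ts n w n ^ 2 + Ss n w n ^ 2 = s ^ 2 := by
    have hSn : Ss n w n = s := by have := hTS n; rw [hTn] at this; linarith
    rw [hSn, hTn]; ring
  -- gap lower bounds
  have hl0 : ∀ k ∈ range (n+1), 0 ≤ Pfun n p (k+1) - Pfun n p k := by
    intro k hk
    rw [Finset.mem_range] at hk
    rcases Nat.eq_zero_or_pos k with rfl | hk1
    · unfold Pfun
      rw [if_neg (by omega), if_pos (by omega), if_pos rfl]
      simpa using hp0
    rcases eq_or_lt_of_le (Nat.lt_succ_iff.1 hk) with rfl | hkn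
    · unfold Pfun
      rw [if_neg (by omega), if_neg (by omega), if_neg (by omega), if_pos (by omega)]
      linarith [hpn]
    · unfold Pfun
      rw [if_neg (by omega), if_pos (by omega), if_neg (by omega), if_pos (by omega)]
      have h := hgap (k-1) (by omega)
      have hk' : k - 1 + 1 = k := by omega
      rw [hk'] at h
      simpa using by linarith
  have hld : ∀ k ∈ Ico 1 n, d ≤ Pfun n p (k+1) - Pfun n p k := by
    intro k hk
    rw [Finset.mem_Ico] at hk
    unfold Pfun
    rw [if_neg (by omega), if_pos (by omega), if_neg (by omega), if_pos (by omega)]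
    have h := hgap (k-1) (by omega)
    have hk' : k - 1 + 1 = k := by omega
    rw [hk'] at h
    simpa using by linarith
  -- the ℓ² bound on w in terms of interior partial sums
  have h3 : ∑ i ∈ range n, (w i)^2 ≤ 2 * ∑ k ∈ Ico 1 n, (Ts n w k ^ 2 + Ss n w k ^ 2) := by
    have hpt : ∀ m ∈ range n, (w m)^2 ≤ (Ts n w m ^ 2 + Ss n w m ^ 2)
        + (Ts n w (m+1) ^ 2 + Ss n w (m+1) ^ 2) - s ^ 2 := by
      intro m hm
      have h1 := hSstep m (Finset.mem_range.1 hm)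
      have h2 := hTstep m (Finset.mem_range.1 hm)
      have h4 := hTS m
      rw [← h4, h1, h2]
      nlinarith [sq_nonneg (Ss n w m - Ts n w (m+1))]
    have e1 : ∑ m ∈ range n, (Ts n w m ^ 2 + Ss n w m ^ 2)
        = (Ts n w 0 ^ 2 + Ss n w 0 ^ 2) + ∑ m ∈ Ico 1 n, (Ts n w m ^ 2 + Ss n w m ^ 2) := by
      rw [Finset.range_eq_Ico, Finset.sum_eq_sum_Ico_succ_bot (by omega : 0 < n)]
    have e2 : ∑ m ∈ range n, (Ts n w (m+1) ^ 2 + Ss n w (m+1) ^ 2)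
        = ∑ m ∈ Ico 1 n, (Ts n w m ^ 2 + Ss n w m ^ 2) + (Ts n w n ^ 2 + Ss n w n ^ 2) := by
      have : ∑ m ∈ Ico 1 (n+1), (Ts n w m ^ 2 + Ss n w m ^ 2)
          = ∑ m ∈ range n, (Ts n w (m+1) ^ 2 + Ss n w (m+1) ^ 2) := by
        rw [Finset.sum_Ico_eq_sum_range]
        simp only [Nat.add_sub_cancel]
        exact Finset.sum_congr rfl (fun i _ => by rw [Nat.add_comm])
      rw [← this, Finset.sum_Ico_succ_top (by omega : 1 ≤ n)]
    calc ∑ i ∈ range n, (w i)^2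
        ≤ ∑ m ∈ range n, ((Ts n w m ^ 2 + Ss n w m ^ 2)
            + (Ts n w (m+1) ^ 2 + Ss n w (m+1) ^ 2) - s ^ 2) := Finset.sum_le_sum hpt
      _ = (∑ m ∈ range n, (Ts n w m ^ 2 + Ss n w m ^ 2))
            + (∑ m ∈ range n, (Ts n w (m+1) ^ 2 + Ss n w (m+1) ^ 2)) - n * s ^ 2 := by
          rw [Finset.sum_sub_distrib, Finset.sum_add_distrib, Finset.sum_const,
            Finset.card_range, nsmul_eq_mul]
      _ ≤ 2 * ∑ k ∈ Ico 1 n, (Ts n w k ^ 2 + Ss n w k ^ 2) := by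
          rw [e1, e2, e0, en]
          have hn2 : (2:ℝ) ≤ (n:ℝ) := by exact_mod_cast hn
          nlinarith [sq_nonneg s]
  calc d / 2 * ∑ i ∈ range n, (w i)^2
      ≤ d / 2 * (2 * ∑ k ∈ Ico 1 n, (Ts n w k ^ 2 + Ss n w k ^ 2)) :=
        mul_le_mul_of_nonneg_left h3 (by positivity)
    _ = d * ∑ k ∈ Ico 1 n, (Ts n w k ^ 2 + Ss n w k ^ 2) := by ring
    _ = ∑ k ∈ Ico 1 n, d * (Ts n w k ^ 2 + Ss n w k ^ 2) := by rw [Finset.mul_sum]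
    _ ≤ ∑ k ∈ Ico 1 n, (Pfun n p (k+1) - Pfun n p k) * (Ts n w k ^ 2 + Ss n w k ^ 2) :=
        Finset.sum_le_sum (fun k hk =>
          mul_le_mul_of_nonneg_right (hld k hk) (by positivity))
    _ ≤ ∑ k ∈ range (n+1), (Pfun n p (k+1) - Pfun n p k) * (Ts n w k ^ 2 + Ss n w k ^ 2) :=
        Finset.sum_le_sum_of_subset_of_nonneg
          (fun k hk => by rw [Finset.mem_Ico] at hk; rw [Finset.mem_range]; omega)
          (fun k hk _ => mul_nonneg (hl0 k hk) (by positivity))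

lemma quadform (α : ℝ) (hα : 1 ≤ α) (n : ℕ) (hn : 2 ≤ n)
    (x : Fin n → ℝ) (hx : Function.Injective x) (hX : ∀ i, x i ∈ Set.Icc (0 : ℝ) π)
    (dmin : ℝ) (hdlb : ∀ i j : Fin n, i ≠ j → dmin ≤ |x i - x j|) (hd0 : 0 ≤ dmin)
    (v : Fin n → ℝ) :
    dmin / (2 * π) * ∑ i, (v i)^2 ≤ ∑ i, ∑ j, v i * (kernelG α (x i) (x j) * v j) := by
  have hπ := pi_pos
  set σ := Tuple.sort x with hσ
  have hmonoy : Monotone (x ∘ σ) := Tuple.monotone_sort x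
  have hsm : StrictMono (x ∘ σ) := hmonoy.strictMono_of_injective (hx.comp σ.injective)
  set p : ℕ → ℝ := fun k => if h : k < n then x (σ ⟨k, h⟩) else π with hp
  set w : ℕ → ℝ := fun k => if h : k < n then v (σ ⟨k, h⟩) else 0 with hw
  have hp0 : 0 ≤ p 0 := by
    simp only [hp]; rw [dif_pos (by omega : 0 < n)]; exact (hX _).1
  have hpn : p (n-1) ≤ π := by
    simp only [hp]; rw [dif_pos (by omega : n - 1 < n)]; exact (hX _).2
  have hgap : ∀ k, k + 1 < n → p k + dmin ≤ p (k+1) := by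
    intro k hk
    have hk' : k < n := by omega
    have hlt : (⟨k, hk'⟩ : Fin n) < ⟨k+1, hk⟩ := by simp [Fin.mk_lt_mk]
    have hne : σ ⟨k, hk'⟩ ≠ σ ⟨k+1, hk⟩ :=
      fun h => absurd (σ.injective h) (Fin.ne_of_lt hlt)
    have h1 := hdlb _ _ hne
    have h2 : x (σ ⟨k, hk'⟩) < x (σ ⟨k+1, hk⟩) := hsm hlt
    rw [abs_of_neg (by linarith : x (σ ⟨k, hk'⟩) - x (σ ⟨k+1, hk⟩) < 0)] at h1
    simp only [hp]
    rw [dif_pos hk', dif_pos hk]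
    linarith
  have hkey := key n hn p w dmin hd0 hp0 hpn hgap
  have tr1 : ∑ i ∈ range n, (w i)^2 = ∑ i, (v i)^2 := by
    rw [← Fin.sum_univ_eq_sum_range (fun k => (w k)^2) n]
    rw [show (∑ i : Fin n, (w ↑i)^2) = ∑ i : Fin n, (v (σ i))^2 from
      Finset.sum_congr rfl (fun i _ => by simp [hw, i.isLt])]
    exact Equiv.sum_comp σ (fun i => (v i)^2)
  have tr2 : ∑ i ∈ range n, ∑ j ∈ range n, w i * w j * (π - |p i - p j|)
      = ∑ i, ∑ j, v i * v j * (π - |x i - x j|) := by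
    rw [← Fin.sum_univ_eq_sum_range
      (fun k => ∑ j ∈ range n, w k * w j * (π - |p k - p j|)) n]
    have inner : ∀ i : Fin n, ∑ j ∈ range n, w ↑i * w j * (π - |p ↑i - p j|)
        = ∑ j : Fin n, v (σ i) * v (σ j) * (π - |x (σ i) - x (σ j)|) := by
      intro i
      rw [← Fin.sum_univ_eq_sum_range (fun j => w ↑i * w j * (π - |p ↑i - p j|)) n]
      refine Finset.sum_congr rfl (fun j _ => ?_)
      simp [hw, hp, i.isLt, j.isLt]
    rw [Finset.sum_congr rfl (fun i _ => inner i)]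
    rw [show (∑ i : Fin n, ∑ j : Fin n, v (σ i) * v (σ j) * (π - |x (σ i) - x (σ j)|))
        = ∑ i : Fin n, (fun a => ∑ j : Fin n, v a * v (σ j) * (π - |x a - x (σ j)|)) (σ i)
        from rfl]
    rw [Equiv.sum_comp σ (fun a => ∑ j : Fin n, v a * v (σ j) * (π - |x a - x (σ j)|))]
    exact Finset.sum_congr rfl
      (fun a _ => Equiv.sum_comp σ (fun b => v a * v b * (π - |x a - x b|)))
  have split : ∑ i, ∑ j, v i * (kernelG α (x i) (x j) * v j)
      = (α - 1) * (∑ i, v i)^2 + (1/π) * ∑ i, ∑ j, v i * v j * (π - |x i - x j|) := by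
    rw [sq, Finset.sum_mul_sum, Finset.mul_sum, Finset.mul_sum, ← Finset.sum_add_distrib]
    refine Finset.sum_congr rfl (fun i _ => ?_)
    rw [Finset.mul_sum, Finset.mul_sum, ← Finset.sum_add_distrib]
    refine Finset.sum_congr rfl (fun j _ => ?_)
    unfold kernelG
    field_simp
    ring
  have hDge : dmin / 2 * ∑ i, (v i)^2 ≤ ∑ i, ∑ j, v i * v j * (π - |x i - x j|) := by
    rw [← tr1, ← tr2]; exact hkey
  rw [split]
  have h1 : (0:ℝ) ≤ (α - 1) * (∑ i, v i)^2 := mul_nonneg (by linarith) (sq_nonneg _)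
  calc dmin / (2*π) * ∑ i, (v i)^2 = (1/π) * (dmin / 2 * ∑ i, (v i)^2) := by ring
    _ ≤ (1/π) * ∑ i, ∑ j, v i * v j * (π - |x i - x j|) :=
        mul_le_mul_of_nonneg_left hDge (by positivity)
    _ ≤ (α - 1) * (∑ i, v i)^2 + (1/π) * ∑ i, ∑ j, v i * v j * (π - |x i - x j|) := by
        linarith

/-- **Minimum eigenvalue of the `G_α` Gram matrix.**  For `α ≥ 1`, `n ≥ 2` and pairwise
distinct `x₁,…,xₙ ∈ [0,π]` with `d_min = min_{i≠j} |xᵢ − xⱼ|`, the smallest eigenvalue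
`λ_min` of `(G_α(xᵢ,xⱼ))` satisfies `d_min/(2π) ≤ λ_min ≤ 2 d_min/π`; in particular the
matrix is positive definite. -/
theorem kernelG_gram_min_eigenvalue_bounds
    (α : ℝ) (hα : 1 ≤ α) (n : ℕ) (hn : 2 ≤ n)
    (x : Fin n → ℝ) (hx : Function.Injective x) (hX : ∀ i, x i ∈ Set.Icc (0 : ℝ) π)
    (dmin : ℝ)
    (hdmin : IsLeast {d : ℝ | ∃ i j : Fin n, i ≠ j ∧ d = |x i - x j|} dmin)
    (hM : (Matrix.of fun i j => kernelG α (x i) (x j)).IsHermitian) :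
    (∀ i, dmin / (2 * π) ≤ hM.eigenvalues i) ∧
    (∃ i, hM.eigenvalues i ≤ 2 * dmin / π) ∧
    (Matrix.of fun i j => kernelG α (x i) (x j)).PosDef := by
  obtain ⟨⟨i0, j0, hne0, heq0⟩, hlb⟩ := hdmin
  have hdlb : ∀ i j : Fin n, i ≠ j → dmin ≤ |x i - x j| := fun i j hij => hlb ⟨i, j, hij, rfl⟩
  have hπ := pi_pos
  have hd0 : 0 < dmin := by
    rw [heq0]; exact abs_pos.2 (sub_ne_zero.2 (fun h => hne0 (hx h)))
  have QF : ∀ v : Fin n → ℝ, dmin / (2*π) * ∑ i, (v i)^2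
      ≤ ∑ i, ∑ j, v i * (kernelG α (x i) (x j) * v j) :=
    quadform α hα n hn x hx hX dmin hdlb hd0.le
  have hQ : ∀ v : Fin n → ℝ,
      v ⬝ᵥ ((Matrix.of fun i j => kernelG α (x i) (x j)) *ᵥ v)
      = ∑ i, ∑ j, v i * (kernelG α (x i) (x j) * v j) := by
    intro v
    simp only [dotProduct, Matrix.mulVec, Matrix.of_apply, Finset.mul_sum]
  -- lower bound
  have lower : ∀ i, dmin / (2 * π) ≤ hM.eigenvalues i := by
    intro i
    set u : Fin n → ℝ := ⇑(hM.eigenvectorBasis i) with hu'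
    have hnorm1 : ‖hM.eigenvectorBasis i‖ = 1 := hM.eigenvectorBasis.orthonormal.1 i
    have hnorm : ∑ j, (u j)^2 = 1 := by
      have h2 : √(∑ j, ‖hM.eigenvectorBasis i j‖ ^ 2) = 1 := by
        rw [← EuclideanSpace.norm_eq]; exact hnorm1
      have h3 := congrArg (fun t : ℝ => t ^ 2) h2
      simp only [one_pow] at h3
      rw [Real.sq_sqrt (by positivity)] at h3
      simpa [hu', Real.norm_eq_abs, sq_abs] using h3
    have heig : hM.eigenvalues i
        = u ⬝ᵥ ((Matrix.of fun i j => kernelG α (x i) (x j)) *ᵥ u) := by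
      have h := hM.eigenvalues_eq i
      simpa using h
    have h3 := QF u
    rw [hnorm, mul_one] at h3
    rw [heig, hQ u]
    exact h3
  refine ⟨lower, ?_, ?_⟩
  -- upper bound
  · by_contra hcon
    push_neg at hcon
    set v0 : Fin n → ℝ := Pi.single i0 1 - Pi.single j0 1 with hv0
    have hMij : (Matrix.of fun i j => kernelG α (x i) (x j)) i0 j0 = α - dmin/π := by
      simp only [Matrix.of_apply, kernelG, ← heq0]
    have hMji : (Matrix.of fun i j => kernelG α (x i) (x j)) j0 i0 = α - dmin/π := by
      simp only [Matrix.of_apply, kernelG, abs_sub_comm (x j0) (x i0), ← heq0]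
    have hMii : (Matrix.of fun i j => kernelG α (x i) (x j)) i0 i0 = α := by
      simp [kernelG]
    have hMjj : (Matrix.of fun i j => kernelG α (x i) (x j)) j0 j0 = α := by
      simp [kernelG]
    have hQv0 : v0 ⬝ᵥ ((Matrix.of fun i j => kernelG α (x i) (x j)) *ᵥ v0)
        = 2 * dmin / π := by
      rw [hv0, Matrix.mulVec_sub, Matrix.mulVec_single, Matrix.mulVec_single,
        sub_dotProduct, dotProduct_sub, dotProduct_sub,
        single_dotProduct, single_dotProduct,
        single_dotProduct, single_dotProduct]
      simp only [Pi.smul_apply, Matrix.col_apply, op_smul_eq_mul, hMii, hMjj, hMij, hMji, mul_one, one_mul]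
      ring
    have hvv : v0 ⬝ᵥ v0 = 2 := by
      rw [hv0, sub_dotProduct, dotProduct_sub, dotProduct_sub,
        dotProduct_single, dotProduct_single,
        dotProduct_single, dotProduct_single]
      rw [Pi.single_eq_same, Pi.single_eq_same,
        Pi.single_eq_of_ne hne0.symm, Pi.single_eq_of_ne hne0]
      norm_num
    set U : Matrix (Fin n) (Fin n) ℝ := (hM.eigenvectorUnitary : Matrix (Fin n) (Fin n) ℝ)
      with hU
    set c := Matrix.vecMul v0 U with hc
    have hUc : (star U) *ᵥ v0 = c := by
      ext k
      simp [hc, Matrix.mulVec, Matrix.vecMul, dotProduct, Matrix.star_apply, mul_comm]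
    have hd2 : v0 ⬝ᵥ ((Matrix.of fun i j => kernelG α (x i) (x j)) *ᵥ v0)
        = c ⬝ᵥ (Matrix.diagonal hM.eigenvalues *ᵥ c) := by
      conv_lhs => rw [hM.spectral_theorem]
      rw [Unitary.conjStarAlgAut_apply]
      rw [show ((U * Matrix.diagonal (RCLike.ofReal ∘ hM.eigenvalues) * star U) *ᵥ v0)
          = U *ᵥ (Matrix.diagonal (RCLike.ofReal ∘ hM.eigenvalues) *ᵥ (star U *ᵥ v0))
          from by rw [Matrix.mulVec_mulVec, Matrix.mulVec_mulVec]]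
      rw [hUc, Matrix.dotProduct_mulVec]
      rw [show (RCLike.ofReal ∘ hM.eigenvalues : Fin n → ℝ) = hM.eigenvalues from rfl]
    have hd3 : c ⬝ᵥ (Matrix.diagonal hM.eigenvalues *ᵥ c)
        = ∑ i, hM.eigenvalues i * (c i)^2 := by
      simp only [dotProduct, Matrix.mulVec_diagonal]
      exact Finset.sum_congr rfl (fun i _ => by ring)
    have h2 : U *ᵥ c = v0 := by
      rw [← hUc, Matrix.mulVec_mulVec,
        Matrix.mem_unitaryGroup_iff.mp hM.eigenvectorUnitary.2, Matrix.one_mulVec]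
    have hd4 : v0 ⬝ᵥ v0 = ∑ i, (c i)^2 := by
      calc v0 ⬝ᵥ v0 = v0 ⬝ᵥ (U *ᵥ c) := by rw [h2]
        _ = c ⬝ᵥ c := by rw [Matrix.dotProduct_mulVec]
        _ = ∑ i, (c i)^2 := by simp [dotProduct, sq]
    have e : ∑ i, hM.eigenvalues i * (c i)^2 = 2 * dmin / π := by
      rw [← hd3, ← hd2, hQv0]
    have e2 : ∑ i, (c i)^2 = 2 := by rw [← hd4, hvv]
    have hsum_ge : 2 * dmin / π * ∑ i, (c i)^2 ≤ ∑ i, hM.eigenvalues i * (c i)^2 := by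
      rw [Finset.mul_sum]
      exact Finset.sum_le_sum (fun i _ => mul_le_mul_of_nonneg_right (hcon i).le (sq_nonneg _))
    rw [e2, e] at hsum_ge
    have hpos : 0 < 2 * dmin / π := div_pos (by linarith) hπ
    linarith
  -- positive definiteness
  · refine Matrix.posDef_iff_dotProduct_mulVec.2 ⟨hM, fun v hv => ?_⟩
    have h1 := QF v
    obtain ⟨i, hi⟩ := Function.ne_iff.1 hv
    have hi' : v i ≠ 0 := by simpa using hi
    have h2 : 0 < ∑ i, (v i)^2 :=
      Finset.sum_pos' (fun j _ => sq_nonneg _)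
        ⟨i, Finset.mem_univ i, by rcases hi'.lt_or_gt with h | h <;> nlinarith⟩
    have h3 : 0 < dmin / (2*π) := div_pos hd0 (by linarith)
    rw [star_trivial, hQ v]
    nlinarith [mul_pos h3 h2]
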